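/- Let k be a field, A a k-algebra of finite expansion, and p a prime ideal of A. Then p is a maximal ideal of A if and only if the residue field κ(p) = Frac(A/p) is an algebraic field extension of k. -/

import Mathlib

set_option synthInstance.maxHeartbeats 800000
set_option maxHeartbeats 1600000


/-- An `R`-algebra `A` is of *finite expansion* if it is integral over a finitely
generated subalgebra, i.e. there is a finite set of quasi-generators. -/
def Algebra.FiniteExpansion (R A : Type*) [CommRing R] [CommRing A] [Algebra R A] : Prop :=
  ∃ s : Finset A, Algebra.IsIntegral (Algebra.adjoin R (s : Set A)) A

/-- Let `A` be an algebra of finite expansion over a field `k`. A prime `p` of `A` is maximal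
iff the residue field `κ(p) = Frac(A ⧸ p)` is an algebraic field extension of `k`. -/
theorem Ideal.isMaximal_iff_residueField_isAlgebraic (k A : Type*) [Field k] [CommRing A]
    [Algebra k A] (hA : Algebra.FiniteExpansion k A) (p : Ideal A) [p.IsPrime] :
    p.IsMaximal ↔ Algebra.IsAlgebraic k (FractionRing (A ⧸ p)) := by
  constructor
  · intro hp
    obtain ⟨s, hs⟩ := hA
    set B := Algebra.adjoin k (s : Set A) with hB
    letI : Field (A ⧸ p) := Ideal.Quotient.field p
    set q : Ideal B := p.comap (algebraMap B A) with hq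
    -- `A ⧸ p` is integral over `B ⧸ q`
    haveI : Algebra.IsIntegral (B ⧸ q) (A ⧸ p) := Algebra.IsIntegral.quotient
    have hinj : Function.Injective (algebraMap (B ⧸ q) (A ⧸ p)) :=
      Ideal.quotientMap_injective
    -- `B ⧸ q` is a field
    have hfield : IsField (B ⧸ q) :=
      isField_of_isIntegral_of_isField hinj (Field.toIsField _)
    letI : Field (B ⧸ q) := hfield.toField
    -- `B ⧸ q` is of finite type over `k`, hence finite, hence algebraic
    haveI : Algebra.FiniteType k B :=
      (Subalgebra.fg_iff_finiteType _).mp (Subalgebra.fg_adjoin_finset _)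
    haveI : Algebra.FiniteType k (B ⧸ q) :=
      Algebra.FiniteType.of_surjective (Ideal.Quotient.mkₐ k q)
        (Ideal.Quotient.mkₐ_surjective k q)
    haveI : Module.Finite k (B ⧸ q) := finite_of_finite_type_of_isJacobsonRing k (B ⧸ q)
    haveI : Algebra.IsAlgebraic k (B ⧸ q) := Algebra.IsAlgebraic.of_finite _ _
    haveI : Algebra.IsAlgebraic (B ⧸ q) (A ⧸ p) :=
      Algebra.isAlgebraic_iff_isIntegral.mpr inferInstance
    haveI : IsScalarTower k (B ⧸ q) (A ⧸ p) := IsScalarTower.of_algebraMap_eq fun c => by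
      show Ideal.Quotient.mk p (algebraMap k A c) =
        Ideal.quotientMap p (algebraMap B A) le_rfl (Ideal.Quotient.mk q (algebraMap k B c))
      rw [Ideal.quotientMap_mk, ← IsScalarTower.algebraMap_apply]
    haveI : Algebra.IsAlgebraic k (A ⧸ p) := Algebra.IsAlgebraic.trans k (B ⧸ q) (A ⧸ p)
    -- `FractionRing (A ⧸ p)` is algebraic over `A ⧸ p` (in fact isomorphic)
    haveI : Algebra.IsIntegral (A ⧸ p) (FractionRing (A ⧸ p)) :=
      Algebra.isIntegral_of_surjective
        ((Field.toIsField (A ⧸ p)).localization_map_bijective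
          (M := nonZeroDivisors (A ⧸ p))
          (mem_nonZeroDivisors_iff_ne_zero.not.mpr (by simp))).2
    haveI : Algebra.IsAlgebraic (A ⧸ p) (FractionRing (A ⧸ p)) :=
      Algebra.isAlgebraic_iff_isIntegral.mpr inferInstance
    exact Algebra.IsAlgebraic.trans k (A ⧸ p) (FractionRing (A ⧸ p))
  · intro h
    have halg : Algebra.IsAlgebraic k (A ⧸ p) := by
      constructor
      intro x
      have hx := h.isAlgebraic (algebraMap (A ⧸ p) (FractionRing (A ⧸ p)) x)
      exact (isAlgebraic_algebraMap_iff
        (IsFractionRing.injective (A ⧸ p) (FractionRing (A ⧸ p)))).mp hx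
    haveI : Algebra.IsIntegral k (A ⧸ p) :=
      Algebra.isAlgebraic_iff_isIntegral.mp halg
    exact Ideal.Quotient.maximal_of_isField p
      (isField_of_isIntegral_of_isField' (Field.toIsField k))
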